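/- Fix a depth k ≥ 1 and let ReLU(v) denote the componentwise map v ↦ max(v, 0). Let W₁ and D₂, …, D_k be arbitrary real matrices, let W₂, …, W_k be matrices with all entries nonnegative, and let b₁, …, b_k be bias vectors. For x ∈ ℝᵈ define z₁ = ReLU(W₁ x + b₁) and z_i = ReLU(W_i z_{i−1} + D_i x + b_i) for i = 2, …, k. Then every coordinate of z_k is a convex function of x on ℝᵈ. -/

import Mathlib

/-- A `k+1`-layer feedforward ReLU network with feedforward weights `W`,
"passthrough" weights `D`, biases `b` and input `x` indexed by `ι`.
Layer dimensions are `n 1, n 2, …`; `net … x i` is the layer `z_{i+1}`: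
`z₁ = ReLU (W₁ x + b₁)` and `z_i = ReLU (W_i z_{i-1} + D_i x + b_i)` for `i ≥ 2`. -/
noncomputable def net {ι : Type} [Fintype ι] (n : ℕ → ℕ)
    (W1 : Matrix (Fin (n 1)) ι ℝ)
    (W : (i : ℕ) → Matrix (Fin (n i)) (Fin (n (i - 1))) ℝ)
    (D : (i : ℕ) → Matrix (Fin (n i)) ι ℝ)
    (b : (i : ℕ) → Fin (n i) → ℝ)
    (x : ι → ℝ) : (i : ℕ) → Fin (n (i + 1)) → ℝ
  | 0 => fun j => max ((W1.mulVec x + b 1) j) 0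
  | (i + 1) => fun j =>
      max (((W (i + 2)).mulVec (net n W1 W D b x i) + (D (i + 2)).mulVec x + b (i + 2)) j) 0


lemma affine_convexOn {ι : Type} [Fintype ι] {m : ℕ} (M : Matrix (Fin m) ι ℝ)
    (c : Fin m → ℝ) (j : Fin m) :
    ConvexOn ℝ Set.univ (fun x : ι → ℝ => (M.mulVec x + c) j) := by
  refine ⟨convex_univ, fun x _ y _ a b' ha hb hab => le_of_eq ?_⟩
  simp only [Pi.add_apply, Matrix.mulVec_add, Matrix.mulVec_smul, Pi.smul_apply, smul_eq_mul]
  have : a * c j + b' * c j = c j := by rw [← add_mul, hab, one_mul]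
  ring_nf
  nlinarith [this]

lemma relu_convexOn {ι : Type} (f : (ι → ℝ) → ℝ)
    (hf : ConvexOn ℝ Set.univ f) :
    ConvexOn ℝ Set.univ (fun x => max (f x) 0) := by
  have h := hf.sup (convexOn_const (0:ℝ) convex_univ)
  have he : (fun x => max (f x) 0) = f ⊔ (fun _ => 0) := by
    funext x; simp [Pi.sup_apply]
  rw [he]; exact h

/-- **Input convexity condition of Amos et al.**
Fix a depth `k + 1 ≥ 1`.  If the hidden-to-hidden weights `W₂, …, W_{k+1}` are
nonnegative (while the first-layer weights `W₁` and passthrough weights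
`D₂, …, D_{k+1}` may have arbitrary sign) then every coordinate of the output
layer `z_{k+1}` of the ReLU network is a convex function of the input `x` on `ℝᵈ`. -/
theorem icnn_amos_inputConvex (d k : ℕ) (n : ℕ → ℕ)
    (W1 : Matrix (Fin (n 1)) (Fin d) ℝ)
    (W : (i : ℕ) → Matrix (Fin (n i)) (Fin (n (i - 1))) ℝ)
    (D : (i : ℕ) → Matrix (Fin (n i)) (Fin d) ℝ)
    (b : (i : ℕ) → Fin (n i) → ℝ)
    (hW : ∀ i, 2 ≤ i → i ≤ k + 1 → ∀ j l, 0 ≤ W i j l)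
    (j : Fin (n (k + 1))) :
    ConvexOn ℝ Set.univ (fun x : Fin d → ℝ => net n W1 W D b x k j) := by
  induction k with
  | zero =>
    exact relu_convexOn _ (affine_convexOn W1 (b 1) j)
  | succ k ih =>
    have ih' : ∀ j : Fin (n (k + 1)),
        ConvexOn ℝ Set.univ (fun x : Fin d → ℝ => net n W1 W D b x k j) := by
      intro j
      exact ih (fun i h2 hk => hW i h2 (hk.trans (Nat.le_succ _))) j
    have hsum : ∀ s : Finset (Fin (n (k + 1))),
        ConvexOn ℝ Set.univ
          (fun x : Fin d → ℝ => ∑ l ∈ s, W (k + 2) j l * net n W1 W D b x k l) := by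
      intro s
      induction s using Finset.induction with
      | empty => simpa using convexOn_const (0:ℝ) convex_univ
      | @insert a s ha ihs =>
        have hterm : ConvexOn ℝ Set.univ
            (fun x : Fin d → ℝ => W (k + 2) j a * net n W1 W D b x k a) := by
          simpa [smul_eq_mul] using
            (ih' a).smul (hW (k + 2) (by omega) (by omega) j a)
        have := hterm.add ihs
        simp only [Finset.sum_insert ha]
        exact this
    have haff := affine_convexOn (D (k + 2)) (b (k + 2)) j
    have hinner : ConvexOn ℝ Set.univ
        (fun x : Fin d → ℝ =>
          ((W (k + 2)).mulVec (net n W1 W D b x k) + (D (k + 2)).mulVec x + b (k + 2)) j) := by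
      have := (hsum Finset.univ).add haff
      convert this using 2 with x
      · rfl
      · simp [Matrix.mulVec, dotProduct, add_assoc]
    exact relu_convexOn _ hinner
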